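/- Let x₁ ~ N(0, 1/n), β₁ with β₁/√n → γ > 0, A | x₁ ~ Bernoulli(σ(x₁β₁)), and let w₁ denote a random variable distributed as x₁ given A = 1. Then Var(√n·w₁) = 1 − n·c_n² where c_n = E[w₁], and lim_{n→∞} Var(√n·w₁) = 1 − 4·e_{γ,0}² with e_{γ,0} = E[z·σ(γz)], z ~ N(0,1). -/

import Mathlib

open MeasureTheory ProbabilityTheory Filter Real

/-- The logistic sigmoid function. -/
noncomputable def sig (t : ℝ) : ℝ := 1 / (1 + Real.exp (-t))

/-- Conditional expectation of `g(x₁)` given `A = 1`, for `x₁ ~ N(0, 1/n)` and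
`A | x₁ ~ Bernoulli(σ(x₁ β₁))`. -/
noncomputable def condExp1 (β₁ : ℝ) (n : ℕ) (g : ℝ → ℝ) : ℝ :=
  (∫ x, g x * sig (x * β₁) ∂(gaussianReal 0 (n : NNReal)⁻¹)) /
  (∫ x, sig (x * β₁) ∂(gaussianReal 0 (n : NNReal)⁻¹))

lemma sig_pos (t : ℝ) : 0 < sig t := by
  unfold sig; positivity

lemma sig_le_one (t : ℝ) : sig t ≤ 1 := by
  unfold sig
  rw [div_le_one (by positivity)]
  nlinarith [Real.exp_pos (-t)]

lemma sig_add_neg (t : ℝ) : sig t + sig (-t) = 1 := by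
  unfold sig
  have h1 : (0:ℝ) < 1 + Real.exp (-t) := by positivity
  have h2 : (0:ℝ) < 1 + Real.exp t := by positivity
  have h3 : Real.exp (-t) * Real.exp t = 1 := by
    rw [← Real.exp_add]; simp
  field_simp
  nlinarith [h3]

lemma continuous_sig : Continuous sig := by
  unfold sig
  exact continuous_const.div (by continuity) (fun t => by positivity)

lemma gauss_map_neg (v : NNReal) :
    (gaussianReal 0 v).map (fun x => -x) = gaussianReal 0 v := by
  have h : (fun x : ℝ => -x) = (fun x : ℝ => (-1) * x) := by funext x; ring
  rw [h, gaussianReal_map_const_mul (-1 : ℝ)]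
  congr 1
  · ring
  · ext; simp

lemma integral_comp_neg_gauss (v : NNReal) (f : ℝ → ℝ)
    (hf : AEStronglyMeasurable f (gaussianReal 0 v)) :
    ∫ x, f (-x) ∂(gaussianReal 0 v) = ∫ x, f x ∂(gaussianReal 0 v) := by
  conv_rhs => rw [← gauss_map_neg v]
  rw [integral_map (measurable_neg.aemeasurable) (by rwa [gauss_map_neg])]

lemma integral_even_mul_sig (v : NNReal) (b : ℝ) (f : ℝ → ℝ)
    (heven : ∀ x, f (-x) = f x) (hmeas : Continuous f)
    (hint : Integrable f (gaussianReal 0 v)) :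
    ∫ x, f x * sig (x * b) ∂(gaussianReal 0 v)
      = (∫ x, f x ∂(gaussianReal 0 v)) / 2 := by
  set μ := gaussianReal 0 v
  have hc1 : Continuous fun x : ℝ => f x * sig (x * b) :=
    hmeas.mul (continuous_sig.comp (continuous_id.mul continuous_const))
  have hc2 : Continuous fun x : ℝ => f x * sig (-(x * b)) :=
    hmeas.mul (continuous_sig.comp (continuous_id.mul continuous_const).neg)
  have hb1 : ∀ᵐ x ∂μ, ‖f x * sig (x * b)‖ ≤ |f x| := by
    refine Eventually.of_forall fun x => ?_
    rw [norm_mul, Real.norm_eq_abs, Real.norm_eq_abs,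
      abs_of_pos (sig_pos _)]
    calc |f x| * sig (x * b) ≤ |f x| * 1 :=
          mul_le_mul_of_nonneg_left (sig_le_one _) (abs_nonneg _)
      _ = |f x| := mul_one _
  have hb2 : ∀ᵐ x ∂μ, ‖f x * sig (-(x * b))‖ ≤ |f x| := by
    refine Eventually.of_forall fun x => ?_
    rw [norm_mul, Real.norm_eq_abs, Real.norm_eq_abs,
      abs_of_pos (sig_pos _)]
    calc |f x| * sig (-(x * b)) ≤ |f x| * 1 :=
          mul_le_mul_of_nonneg_left (sig_le_one _) (abs_nonneg _)
      _ = |f x| := mul_one _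
  have int1 : Integrable (fun x => f x * sig (x * b)) μ :=
    hint.abs.mono' hc1.aestronglyMeasurable hb1
  have int2 : Integrable (fun x => f x * sig (-(x * b))) μ :=
    hint.abs.mono' hc2.aestronglyMeasurable hb2
  have hneg : ∫ x, f x * sig (-(x * b)) ∂μ = ∫ x, f x * sig (x * b) ∂μ := by
    have := integral_comp_neg_gauss v (fun x => f x * sig (x * b))
      hc1.aestronglyMeasurable
    rw [← this]
    congr 1 with x
    simp only [heven x]
    ring_nf
  have hsum : (∫ x, f x * sig (x * b) ∂μ) + ∫ x, f x * sig (-(x * b)) ∂μ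
      = ∫ x, f x ∂μ := by
    rw [← integral_add int1 int2]
    congr 1 with x
    rw [← mul_add, sig_add_neg, mul_one]
  rw [hneg] at hsum
  linarith

lemma integral_sig_gauss (v : NNReal) (b : ℝ) :
    ∫ x, sig (x * b) ∂(gaussianReal 0 v) = 1 / 2 := by
  have := integral_even_mul_sig v b (fun _ => 1) (fun _ => rfl)
    continuous_const (integrable_const 1)
  simpa using this


lemma pdf_one (x : ℝ) :
    gaussianPDFReal 0 1 x = (Real.sqrt (2 * π))⁻¹ * Real.exp (-(1/2) * x^2) := by
  unfold gaussianPDFReal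
  norm_num
  left
  ring_nf

lemma rpow_two_eq (x : ℝ) : x ^ (2:ℝ) = x ^ 2 := by
  rw [show (2:ℝ) = ((2:ℕ):ℝ) by norm_num, Real.rpow_natCast]

lemma integral_gauss_one (g : ℝ → ℝ) :
    ∫ x, g x ∂(gaussianReal 0 1) = ∫ x, gaussianPDFReal 0 1 x * g x := by
  rw [gaussianReal_of_var_ne_zero 0 one_ne_zero]
  have h : gaussianPDF 0 1 = fun x => ((gaussianPDFReal 0 1 x).toNNReal : ENNReal) := rfl
  rw [h, integral_withDensity_eq_integral_smul
    ((measurable_gaussianPDFReal 0 1).real_toNNReal) g]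
  congr 1 with x
  rw [NNReal.smul_def, smul_eq_mul, Real.coe_toNNReal _ (gaussianPDFReal_nonneg _ _ _)]

lemma integrable_gauss_one_iff (g : ℝ → ℝ) :
    Integrable g (gaussianReal 0 1)
      ↔ Integrable (fun x => g x * gaussianPDFReal 0 1 x) volume := by
  rw [gaussianReal_of_var_ne_zero 0 one_ne_zero,
    integrable_withDensity_iff (measurable_gaussianPDF 0 1)
      (Eventually.of_forall fun x => ENNReal.ofReal_lt_top)]
  have h : (fun x => g x * (gaussianPDF 0 1 x).toReal)
      = fun x => g x * gaussianPDFReal 0 1 x := by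
    funext x
    rw [gaussianPDF, ENNReal.toReal_ofReal (gaussianPDFReal_nonneg _ _ _)]
  rw [h]

lemma sq_int : Integrable (fun x : ℝ => x ^ 2) (gaussianReal 0 1) := by
  rw [integrable_gauss_one_iff]
  have h0 : Integrable (fun x : ℝ => x ^ (2:ℝ) * Real.exp (-(1/2) * x^2)) volume :=
    integrable_rpow_mul_exp_neg_mul_sq (by norm_num) (by norm_num)
  have heq : (fun x : ℝ => x ^ (2:ℝ) * Real.exp (-(1/2) * x^2))
      = fun x : ℝ => x ^ 2 * Real.exp (-(1/2) * x^2) := by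
    funext x; rw [rpow_two_eq]
  rw [heq] at h0
  have h2 := h0.const_mul ((Real.sqrt (2 * π))⁻¹)
  have heq2 : (fun x : ℝ => (Real.sqrt (2 * π))⁻¹ * (x ^ 2 * Real.exp (-(1/2) * x^2)))
      = fun x : ℝ => x ^ 2 * gaussianPDFReal 0 1 x := by
    funext x; rw [pdf_one]; ring
  rwa [heq2] at h2

lemma abs_int : Integrable (fun z : ℝ => |z|) (gaussianReal 0 1) := by
  have hb : Integrable (fun z : ℝ => (1 + z^2)/2) (gaussianReal 0 1) :=
    ((integrable_const (1:ℝ)).add sq_int).div_const 2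
  refine hb.mono' (continuous_abs.aestronglyMeasurable) ?_
  refine Eventually.of_forall fun z => ?_
  rw [Real.norm_eq_abs, abs_abs]
  nlinarith [sq_nonneg (|z| - 1), sq_abs z]

lemma sq_moment : ∫ x, x ^ 2 ∂(gaussianReal 0 1) = 1 := by
  rw [integral_gauss_one]
  have h1 : ∀ x : ℝ, gaussianPDFReal 0 1 x * x ^ 2
      = (Real.sqrt (2 * π))⁻¹ * (x ^ 2 * Real.exp (-(1/2) * x^2)) := by
    intro x; rw [pdf_one]; ring
  simp_rw [h1]
  rw [integral_const_mul]
  have heven : ∫ x : ℝ, x ^ 2 * Real.exp (-(1/2) * x^2)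
      = 2 * ∫ x in Set.Ioi (0:ℝ), x ^ 2 * Real.exp (-(1/2) * x^2) := by
    rw [← integral_comp_abs (f := fun x => x ^ 2 * Real.exp (-(1/2) * x^2))]
    congr 1 with x
    rw [sq_abs]
  rw [heven]
  have hIoi : ∫ x in Set.Ioi (0:ℝ), x ^ 2 * Real.exp (-(1/2) * x^2)
      = (1/2:ℝ) ^ (-(((2:ℝ) + 1)) / 2) * (1 / 2) * Real.Gamma (((2:ℝ) + 1) / 2) := by
    rw [← integral_rpow_mul_exp_neg_mul_rpow (by norm_num : (0:ℝ) < 2)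
      (by norm_num : (-1:ℝ) < 2) (by norm_num : (0:ℝ) < 1/2)]
    refine setIntegral_congr_fun measurableSet_Ioi fun x hx => ?_
    simp only [rpow_two_eq]
  rw [hIoi]
  have hG : Real.Gamma (((2:ℝ) + 1) / 2) = Real.sqrt π / 2 := by
    rw [show (((2:ℝ) + 1) / 2) = 1/2 + 1 by norm_num,
      Real.Gamma_add_one (by norm_num), Real.Gamma_one_half_eq]
    ring
  have h23 : (2:ℝ) ^ (3:ℝ) = 8 := by
    rw [show (3:ℝ) = ((3:ℕ):ℝ) by norm_num, Real.rpow_natCast]; norm_num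
  have hpow : (1/2:ℝ) ^ (-(((2:ℝ) + 1)) / 2) = 2 * Real.sqrt 2 := by
    rw [show (-(((2:ℝ) + 1)) / 2) = -(3/2) by norm_num, one_div,
      Real.inv_rpow (by norm_num), ← Real.rpow_neg (by norm_num), neg_neg]
    rw [show ((3:ℝ)/2) = (3:ℝ) * (1/2) by ring, Real.rpow_mul (by norm_num), h23,
      ← Real.sqrt_eq_rpow]
    rw [show (8:ℝ) = 2^2 * 2 by norm_num, Real.sqrt_mul (by positivity),
      Real.sqrt_sq (by norm_num : (0:ℝ) ≤ 2)]
  rw [hG, hpow, Real.sqrt_mul (by positivity) π]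
  have h2 : Real.sqrt 2 > 0 := Real.sqrt_pos.mpr (by norm_num)
  have hπ : Real.sqrt π > 0 := Real.sqrt_pos.mpr Real.pi_pos
  field_simp

lemma gauss_map_scale {n : ℕ} (hn : 0 < n) :
    (gaussianReal 0 1).map (fun z => (Real.sqrt n)⁻¹ * z)
      = gaussianReal 0 (n : NNReal)⁻¹ := by
  have hsp : (0:ℝ) < Real.sqrt n := Real.sqrt_pos.mpr (by exact_mod_cast hn)
  rw [gaussianReal_map_const_mul ((Real.sqrt n)⁻¹)]
  congr 1
  · ring
  · ext
    push_cast
    rw [mul_one, inv_pow, Real.sq_sqrt (by positivity : (0:ℝ) ≤ (n:ℝ))]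

lemma integral_scale {n : ℕ} (hn : 0 < n) (g : ℝ → ℝ) (hg : Continuous g) :
    ∫ x, g x ∂(gaussianReal 0 (n : NNReal)⁻¹)
      = ∫ z, g ((Real.sqrt n)⁻¹ * z) ∂(gaussianReal 0 1) := by
  rw [← gauss_map_scale hn,
    integral_map (by fun_prop) hg.aestronglyMeasurable]

lemma integrable_scale {n : ℕ} (hn : 0 < n) (g : ℝ → ℝ) (hg : Continuous g) :
    Integrable g (gaussianReal 0 (n : NNReal)⁻¹)
      ↔ Integrable (fun z => g ((Real.sqrt n)⁻¹ * z)) (gaussianReal 0 1) := by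
  rw [← gauss_map_scale hn,
    integrable_map_measure hg.aestronglyMeasurable (by fun_prop)]
  rfl

lemma sq_moment_n {n : ℕ} (hn : 0 < n) :
    ∫ x, (n:ℝ) * x ^ 2 ∂(gaussianReal 0 (n : NNReal)⁻¹) = 1 := by
  rw [integral_scale hn _ (by continuity)]
  have hq : ∀ z : ℝ, (n:ℝ) * ((Real.sqrt n)⁻¹ * z) ^ 2 = z ^ 2 := by
    intro z
    rw [mul_pow, inv_pow, Real.sq_sqrt (by positivity : (0:ℝ) ≤ (n:ℝ))]
    field_simp
  simp_rw [hq]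
  exact sq_moment

lemma sq_int_n {n : ℕ} (hn : 0 < n) :
    Integrable (fun x => (n:ℝ) * x ^ 2) (gaussianReal 0 (n : NNReal)⁻¹) := by
  rw [integrable_scale hn _ (by continuity)]
  have hq : ∀ z : ℝ, (n:ℝ) * ((Real.sqrt n)⁻¹ * z) ^ 2 = z ^ 2 := by
    intro z
    rw [mul_pow, inv_pow, Real.sq_sqrt (by positivity : (0:ℝ) ≤ (n:ℝ))]
    field_simp
  simp only [hq]
  exact sq_int

attribute [continuity, fun_prop] continuous_sig

lemma part1 (β : ℝ) {n : ℕ} (hn : 0 < n) :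
    condExp1 β n (fun x => (n:ℝ) * x ^ 2) = 1 := by
  unfold condExp1
  rw [integral_sig_gauss,
    integral_even_mul_sig _ β _ (fun x => by ring) (by continuity) (sq_int_n hn),
    sq_moment_n hn]
  norm_num

lemma cn_eq (β : ℝ) {n : ℕ} (hn : 0 < n) :
    condExp1 β n id
      = 2 * (Real.sqrt n)⁻¹
        * ∫ z, z * sig (z * (β / Real.sqrt n)) ∂(gaussianReal 0 1) := by
  unfold condExp1
  rw [integral_sig_gauss]
  rw [integral_scale hn (fun x => id x * sig (x * β)) (by fun_prop)]
  have hz : ∀ z : ℝ, id ((Real.sqrt n)⁻¹ * z) * sig (((Real.sqrt n)⁻¹ * z) * β)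
      = (Real.sqrt n)⁻¹ * (z * sig (z * (β / Real.sqrt n))) := by
    intro z
    have harg : ((Real.sqrt n)⁻¹ * z) * β = z * (β / Real.sqrt n) := by
      rw [div_eq_mul_inv]; ring
    rw [harg]
    simp only [id]
    ring
  simp_rw [hz]
  rw [integral_const_mul]
  ring

lemma ncsq (β : ℝ) {n : ℕ} (hn : 0 < n) :
    (n:ℝ) * (condExp1 β n id) ^ 2
      = 4 * (∫ z, z * sig (z * (β / Real.sqrt n)) ∂(gaussianReal 0 1)) ^ 2 := by
  rw [cn_eq β hn]
  have hs2 : (Real.sqrt n) ^ 2 = (n:ℝ) := Real.sq_sqrt (by positivity)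
  have hs : Real.sqrt n ≠ 0 :=
    ne_of_gt (Real.sqrt_pos.mpr (by exact_mod_cast hn))
  rw [← hs2]
  field_simp
  rw [Real.sqrt_sq (Real.sqrt_nonneg _)]
  congr 3
  · norm_num
  · funext z
    rw [mul_comm z β]

lemma T_tendsto (β₁ : ℕ → ℝ) (γ : ℝ)
    (hβ : Tendsto (fun n => β₁ n / Real.sqrt n) atTop (nhds γ)) :
    Tendsto (fun n => ∫ z, z * sig (z * (β₁ n / Real.sqrt n)) ∂(gaussianReal 0 1))
      atTop (nhds (∫ z, z * sig (z * γ) ∂(gaussianReal 0 1))) := by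
  refine tendsto_integral_filter_of_dominated_convergence (fun z => |z|) ?_ ?_ abs_int ?_
  · exact Eventually.of_forall fun n => (by fun_prop :
      Continuous fun z : ℝ => z * sig (z * (β₁ n / Real.sqrt n))).aestronglyMeasurable
  · refine Eventually.of_forall fun n => Eventually.of_forall fun z => ?_
    rw [Real.norm_eq_abs, abs_mul, abs_of_pos (sig_pos _)]
    calc |z| * sig (z * (β₁ n / Real.sqrt n)) ≤ |z| * 1 :=
          mul_le_mul_of_nonneg_left (sig_le_one _) (abs_nonneg _)
      _ = |z| := mul_one _
  · refine Eventually.of_forall fun z => ?_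
    have hc : Continuous fun t : ℝ => z * sig (z * t) := by fun_prop
    exact (hc.continuousAt.tendsto).comp hβ


/-- With `w₁ ~ (x₁ | A = 1)` and `c_n = E[w₁]`: `Var(√n w₁) = 1 - n c_n²`, and
`Var(√n w₁) → 1 - 4 e_{γ,0}²` where `e_{γ,0} = E[z σ(γz)]`, `z ~ N(0,1)`. -/
theorem conditional_variance_limit (β₁ : ℕ → ℝ) (γ : ℝ) (hγ : 0 < γ)
    (hβ : Tendsto (fun n => β₁ n / Real.sqrt n) atTop (nhds γ)) :
    (∀ n : ℕ, 0 < n →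
      condExp1 (β₁ n) n (fun x => (n : ℝ) * x ^ 2)
          - (n : ℝ) * (condExp1 (β₁ n) n id) ^ 2
        = 1 - (n : ℝ) * (condExp1 (β₁ n) n id) ^ 2) ∧
    Tendsto (fun n =>
        condExp1 (β₁ n) n (fun x => (n : ℝ) * x ^ 2)
          - (n : ℝ) * (condExp1 (β₁ n) n id) ^ 2)
      atTop (nhds (1 - 4 * (∫ z, z * sig (γ * z) ∂(gaussianReal 0 1)) ^ 2)) := by
  constructor
  · intro n hn
    rw [part1 (β₁ n) hn]
  · have hE : (∫ z, z * sig (γ * z) ∂(gaussianReal 0 1))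
        = ∫ z, z * sig (z * γ) ∂(gaussianReal 0 1) := by
      congr 1 with z
      rw [mul_comm γ z]
    have hT := T_tendsto β₁ γ hβ
    have hnice : Tendsto (fun n =>
        1 - 4 * (∫ z, z * sig (z * (β₁ n / Real.sqrt n)) ∂(gaussianReal 0 1)) ^ 2)
        atTop (nhds (1 - 4 * (∫ z, z * sig (γ * z) ∂(gaussianReal 0 1)) ^ 2)) := by
      rw [hE]
      exact tendsto_const_nhds.sub ((hT.pow 2).const_mul 4)
    refine hnice.congr' ?_
    filter_upwards [eventually_gt_atTop 0] with n hn
    rw [part1 (β₁ n) hn, ncsq (β₁ n) hn]
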